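/- The automorphisms S², σ and σ' mutually commute: σ ∘ σ' = σ' ∘ σ, σ ∘ S² = S² ∘ σ, and σ' ∘ S² = S² ∘ σ'. -/

import Mathlib

open TensorProduct HopfAlgebra Coalgebra

section Infra

variable {A : Type*} [Ring A] [HopfAlgebra ℂ A]

/-- Build a trilinear map from a function and linearity proofs. -/
def mk₃ {M : Type*} [AddCommGroup M] [Module ℂ M] (f : A → A → A → M)
    (ha₁ : ∀ x x' y z, f (x + x') y z = f x y z + f x' y z)
    (hs₁ : ∀ (c : ℂ) x y z, f (c • x) y z = c • f x y z)
    (ha₂ : ∀ x y y' z, f x (y + y') z = f x y z + f x y' z)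
    (hs₂ : ∀ (c : ℂ) x y z, f x (c • y) z = c • f x y z)
    (ha₃ : ∀ x y z z', f x y (z + z') = f x y z + f x y z')
    (hs₃ : ∀ (c : ℂ) x y z, f x y (c • z) = c • f x y z) :
    A →ₗ[ℂ] A →ₗ[ℂ] A →ₗ[ℂ] M where
  toFun x := LinearMap.mk₂ ℂ (f x) (fun y y' z => ha₂ x y y' z) (fun c y z => hs₂ c x y z)
    (fun y z z' => ha₃ x y z z') (fun c y z => hs₃ c x y z)
  map_add' x x' := by ext y z; exact ha₁ x x' y z
  map_smul' c x := by ext y z; exact hs₁ c x y z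

@[simp] lemma mk₃_apply {M : Type*} [AddCommGroup M] [Module ℂ M] (f : A → A → A → M)
    (h1 h2 h3 h4 h5 h6) (x y z : A) : mk₃ f h1 h2 h3 h4 h5 h6 x y z = f x y z := rfl

/-- Uncurry a trilinear map against `A ⊗ (A ⊗ A)`. -/
noncomputable def un₃ {M : Type*} [AddCommGroup M] [Module ℂ M]
    (t : A →ₗ[ℂ] A →ₗ[ℂ] A →ₗ[ℂ] M) : A ⊗[ℂ] (A ⊗[ℂ] A) →ₗ[ℂ] M :=
  TensorProduct.lift ((TensorProduct.lift.equiv (RingHom.id ℂ) A A M).toLinearMap ∘ₗ t)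

@[simp] lemma un₃_apply {M : Type*} [AddCommGroup M] [Module ℂ M]
    (t : A →ₗ[ℂ] A →ₗ[ℂ] A →ₗ[ℂ] M) (x y z : A) :
    un₃ t (x ⊗ₜ[ℂ] (y ⊗ₜ[ℂ] z)) = t x y z := rfl

/-- Coassociativity for triple contractions. -/
lemma triple_switch {M : Type*} [AddCommGroup M] [Module ℂ M]
    (t : A →ₗ[ℂ] A →ₗ[ℂ] A →ₗ[ℂ] M) (a : A) {ι : Type*} {κ Λ : ι → Type*} (r : Repr ℂ a ι)
    (r1 : ∀ i : ι, Repr ℂ (r.left i) (κ i)) (r2 : ∀ i : ι, Repr ℂ (r.right i) (Λ i)) :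
    ∑ i ∈ r.index, ∑ k ∈ (r1 i).index,
      t ((r1 i).left k) ((r1 i).right k) (r.right i)
    = ∑ i ∈ r.index, ∑ k ∈ (r2 i).index,
      t (r.left i) ((r2 i).left k) ((r2 i).right k) := by
  have h := Coalgebra.sum_tmul_tmul_eq r r1 r2
  have := congrArg (un₃ t) h
  simpa [map_sum] using this

/-- A representation of `comul (x * y)` from representations of `x` and `y`. -/
noncomputable def Coalgebra.Repr.mul₀ {x y : A} {ι κ : Type*} (r : Repr ℂ x ι) (s : Repr ℂ y κ) :
    Repr ℂ (x * y) (ι × κ) where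
  index := r.index ×ˢ s.index
  left p := r.left p.1 * s.left p.2
  right p := r.right p.1 * s.right p.2
  eq := by
    rw [Bialgebra.comul_mul, ← r.eq, ← s.eq, Finset.sum_mul_sum]
    rw [Finset.sum_product]
    simp [Algebra.TensorProduct.tmul_mul_tmul]

lemma sum_counit_smul {a : A} {ι : Type*} (r : Repr ℂ a ι) :
    ∑ i ∈ r.index, counit (R := ℂ) (r.left i) • r.right i = a := by
  have h := Coalgebra.sum_counit_tmul_eq r
  have h2 : ∑ i ∈ r.index, (TensorProduct.lid ℂ A) (counit (R := ℂ) (r.left i) ⊗ₜ[ℂ] r.right i)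
      = (TensorProduct.lid ℂ A) ((1 : ℂ) ⊗ₜ[ℂ] a) := by
    rw [← map_sum]; exact congrArg _ h
  simpa only [TensorProduct.lid_tmul, one_smul] using h2

lemma sum_smul_counit {a : A} {ι : Type*} (r : Repr ℂ a ι) :
    ∑ i ∈ r.index, counit (R := ℂ) (r.right i) • r.left i = a := by
  have h := Coalgebra.sum_tmul_counit_eq r
  have h2 : ∑ i ∈ r.index, (TensorProduct.rid ℂ A) (r.left i ⊗ₜ[ℂ] counit (R := ℂ) (r.right i))
      = (TensorProduct.rid ℂ A) (a ⊗ₜ[ℂ] (1 : ℂ)) := by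
    rw [← map_sum]; exact congrArg _ h
  simpa only [TensorProduct.rid_tmul, one_smul] using h2

/-- A representation of `comul 1`. -/
noncomputable def oneRepr : Repr ℂ (1 : A) Unit where
  index := {⟨⟩}
  left _ := 1
  right _ := 1
  eq := by simp [Bialgebra.comul_one, Algebra.TensorProduct.one_def]

lemma S_one : antipode (R := ℂ) (1 : A) = 1 := by
  have := sum_antipode_mul_eq_smul (R := ℂ) (oneRepr (A := A))
  simpa [oneRepr] using this

end Infra
section Anti

variable {A : Type*} [Ring A] [HopfAlgebra ℂ A]

local notation "S" => (antipode (R := ℂ) (A := A))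
local notation "ε" => (counit (R := ℂ) (A := A))

/-- iterated-sum version of the antipode axiom for a product. -/
lemma sum_antipode_mul_mul {x y : A} {ι κ : Type*} (rx : Repr ℂ x ι) (ry : Repr ℂ y κ) :
    ∑ k ∈ rx.index, ∑ l ∈ ry.index,
      S (rx.left k * ry.left l) * (rx.right k * ry.right l)
    = ε (x * y) • (1 : A) := by
  have hco := sum_antipode_mul_eq_smul (R := ℂ) (rx.mul₀ ry)
  simp only [Coalgebra.Repr.mul₀] at hco
  rw [Finset.sum_product] at hco
  exact hco

set_option linter.unusedSectionVars false in
private lemma sum_mul_right {ι : Type*} (t : Finset ι) (f g : ι → A) (z : A) :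
    ∑ l ∈ t, f l * (g l * z) = (∑ l ∈ t, f l * g l) * z := by
  rw [Finset.sum_mul]; exact Finset.sum_congr rfl fun l _ => (mul_assoc _ _ _).symm

lemma S_mul (a b : A) : S (a * b) = S b * S a := by
  classical
  have r : Repr ℂ a (A × A) := ℛ ℂ a
  have s : Repr ℂ b (A × A) := ℛ ℂ b
  have r1 : ∀ i : r.ι, Repr ℂ (r.left i) (A × A) := fun i => ℛ ℂ (r.left i)
  have r2 : ∀ i : r.ι, Repr ℂ (r.right i) (A × A) := fun i => ℛ ℂ (r.right i)
  have s1 : ∀ j : s.ι, Repr ℂ (s.left j) (A × A) := fun j => ℛ ℂ (s.left j)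
  have s2 : ∀ j : s.ι, Repr ℂ (s.right j) (A × A) := fun j => ℛ ℂ (s.right j)
  set ta : A →ₗ[ℂ] A →ₗ[ℂ] A →ₗ[ℂ] A := mk₃
    (fun α₁ α₂ α₃ => ∑ j ∈ s.index, ∑ l ∈ (s1 j).index,
      S (α₁ * (s1 j).left l) * ((α₂ * (s1 j).right l) * (S (s.right j) * S α₃)))
    (by intro x x' y z; simp [add_mul, mul_add, map_add, Finset.sum_add_distrib])
    (by intro c x y z; simp [smul_mul_assoc, mul_smul_comm, map_smul, Finset.smul_sum])
    (by intro x y y' z; simp [add_mul, mul_add, map_add, Finset.sum_add_distrib])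
    (by intro c x y z; simp [smul_mul_assoc, mul_smul_comm, map_smul, Finset.smul_sum])
    (by intro x y z z'; simp [add_mul, mul_add, map_add, Finset.sum_add_distrib])
    (by intro c x y z; simp [smul_mul_assoc, mul_smul_comm, map_smul, Finset.smul_sum])
    with hta
  have key := triple_switch ta a r r1 r2
  -- Step A : the left-hand side of `key` equals `S b * S a`
  have stepA : ∑ i ∈ r.index, ∑ k ∈ (r1 i).index,
      ta ((r1 i).left k) ((r1 i).right k) (r.right i) = S b * S a := by
    have inner : ∀ i ∈ r.index,
        (∑ k ∈ (r1 i).index, ta ((r1 i).left k) ((r1 i).right k) (r.right i))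
        = ∑ j ∈ s.index, (ε (r.left i) * ε (s.left j)) • (S (s.right j) * S (r.right i)) := by
      intro i _
      rw [Finset.sum_congr rfl (fun k _ => by rw [hta, mk₃_apply])]
      rw [Finset.sum_comm]
      refine Finset.sum_congr rfl (fun j _ => ?_)
      have hco := sum_antipode_mul_mul (r1 i) (s1 j)
      rw [Finset.sum_congr rfl (fun k (_ : k ∈ (r1 i).index) => sum_mul_right _ _ _ _),
        ← Finset.sum_mul, hco, Bialgebra.counit_mul, smul_mul_assoc, one_mul]
    rw [Finset.sum_congr rfl inner]
    have hb : S b = ∑ j ∈ s.index, ε (s.left j) • S (s.right j) := by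
      conv_lhs => rw [← _root_.sum_counit_smul s]
      simp [map_sum]
    have ha' : S a = ∑ i ∈ r.index, ε (r.left i) • S (r.right i) := by
      conv_lhs => rw [← _root_.sum_counit_smul r]
      simp [map_sum]
    rw [hb, ha', Finset.sum_mul_sum, Finset.sum_comm]
    refine Finset.sum_congr rfl fun j _ => Finset.sum_congr rfl fun i _ => ?_
    rw [smul_mul_assoc, mul_smul_comm, smul_smul, mul_comm (ε (s.left j)) (ε (r.left i))]
  -- Step B : the right-hand side of `key` equals `S (a * b)`
  have stepB : ∑ i ∈ r.index, ∑ k ∈ (r2 i).index,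
      ta (r.left i) ((r2 i).left k) ((r2 i).right k) = S (a * b) := by
    have hswB : ∀ i (k : (r2 i).ι),
        ta (r.left i) ((r2 i).left k) ((r2 i).right k)
        = ∑ j ∈ s.index, ∑ l ∈ (s2 j).index,
            S (r.left i * s.left j) *
              (((r2 i).left k * (s2 j).left l) *
                (S ((s2 j).right l) * S ((r2 i).right k))) := by
      intro i k
      rw [hta, mk₃_apply]
      exact triple_switch (mk₃
        (fun β₁ β₂ β₃ => S (r.left i * β₁) *
          (((r2 i).left k * β₂) * (S β₃ * S ((r2 i).right k))))
        (by intro x x' y z; simp [add_mul, mul_add, map_add])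
        (by intro c x y z; simp [smul_mul_assoc, mul_smul_comm, map_smul])
        (by intro x y y' z; simp [add_mul, mul_add, map_add])
        (by intro c x y z; simp [smul_mul_assoc, mul_smul_comm, map_smul])
        (by intro x y z z'; simp [add_mul, mul_add, map_add])
        (by intro c x y z; simp [smul_mul_assoc, mul_smul_comm, map_smul]))
        b s s1 s2
    rw [Finset.sum_congr rfl (fun i _ => Finset.sum_congr rfl (fun k _ => hswB i k))]
    have inner : ∀ i ∈ r.index,
        (∑ k ∈ (r2 i).index, ∑ j ∈ s.index, ∑ l ∈ (s2 j).index,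
          S (r.left i * s.left j) *
            (((r2 i).left k * (s2 j).left l) * (S ((s2 j).right l) * S ((r2 i).right k))))
        = ∑ j ∈ s.index, (ε (r.right i) * ε (s.right j)) • S (r.left i * s.left j) := by
      intro i _
      rw [Finset.sum_comm]
      refine Finset.sum_congr rfl (fun j _ => ?_)
      have hv := sum_mul_antipode_eq_smul (R := ℂ) (s2 j)
      have hy := sum_mul_antipode_eq_smul (R := ℂ) (r2 i)
      have e2 : ∀ k ∈ (r2 i).index,
          (∑ l ∈ (s2 j).index,
            S (r.left i * s.left j) *
              (((r2 i).left k * (s2 j).left l) * (S ((s2 j).right l) * S ((r2 i).right k))))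
          = ε (s.right j) • (S (r.left i * s.left j) *
              ((r2 i).left k * S ((r2 i).right k))) := by
        intro k _
        have e3 : ∀ l ∈ (s2 j).index,
            S (r.left i * s.left j) *
              (((r2 i).left k * (s2 j).left l) * (S ((s2 j).right l) * S ((r2 i).right k)))
            = S (r.left i * s.left j) *
              ((r2 i).left k * (((s2 j).left l * S ((s2 j).right l)) * S ((r2 i).right k))) := by
          intro l _
          rw [mul_assoc ((r2 i).left k), ← mul_assoc ((s2 j).left l)]
        rw [Finset.sum_congr rfl e3, ← Finset.mul_sum, ← Finset.mul_sum, ← Finset.sum_mul,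
          hv, smul_mul_assoc, one_mul, mul_smul_comm, mul_smul_comm]
      rw [Finset.sum_congr rfl e2, ← Finset.smul_sum, ← Finset.mul_sum, hy, mul_smul_comm,
        mul_one, smul_smul, mul_comm (ε (s.right j)) (ε (r.right i))]
    rw [Finset.sum_congr rfl inner]
    have hab : S (a * b) = ∑ i ∈ r.index, ∑ j ∈ s.index,
        (ε (r.right i) * ε (s.right j)) • S (r.left i * s.left j) := by
      conv_lhs => rw [← sum_smul_counit r, ← sum_smul_counit s]
      rw [Finset.sum_mul_sum, map_sum]
      refine Finset.sum_congr rfl fun i _ => ?_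
      rw [map_sum]
      refine Finset.sum_congr rfl fun j _ => ?_
      rw [smul_mul_assoc, mul_smul_comm, map_smul, map_smul, smul_smul]
    rw [hab]
  rw [← stepA, ← stepB]
  exact key.symm

end Anti
section SLI

variable {A : Type*} [Ring A] [HopfAlgebra ℂ A]

local notation "S" => (antipode (R := ℂ) (A := A))
local notation "ε" => (counit (R := ℂ) (A := A))

/-- The map `u ⊗ v ↦ φ(v) • u`. -/
noncomputable def Fmap (φ : A →ₗ[ℂ] ℂ) : A ⊗[ℂ] A →ₗ[ℂ] A :=
  (TensorProduct.rid ℂ A).toLinearMap ∘ₗ LinearMap.lTensor A φ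

@[simp] lemma Fmap_tmul (φ : A →ₗ[ℂ] ℂ) (u v : A) :
    Fmap φ (u ⊗ₜ[ℂ] v) = φ v • u := rfl

/-- The map `u ⊗ v ↦ φ(u) • v`. -/
noncomputable def Gmap (φ : A →ₗ[ℂ] ℂ) : A ⊗[ℂ] A →ₗ[ℂ] A :=
  (TensorProduct.lid ℂ A).toLinearMap ∘ₗ LinearMap.rTensor A φ

@[simp] lemma Gmap_tmul (φ : A →ₗ[ℂ] ℂ) (u v : A) :
    Gmap φ (u ⊗ₜ[ℂ] v) = φ u • v := rfl

lemma mul_Fmap (φ : A →ₗ[ℂ] ℂ) (x : A) (t : A ⊗[ℂ] A) :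
    x * Fmap φ t = Fmap φ ((x ⊗ₜ[ℂ] (1:A)) * t) := by
  induction t using TensorProduct.induction_on with
  | zero => simp
  | tmul u v => simp [Algebra.TensorProduct.tmul_mul_tmul, mul_smul_comm]
  | add t₁ t₂ h₁ h₂ => simp only [map_add, mul_add, h₁, h₂]

lemma Gmap_mul (φ : A →ₗ[ℂ] ℂ) (t : A ⊗[ℂ] A) (y : A) :
    Gmap φ t * y = Gmap φ (t * ((1:A) ⊗ₜ[ℂ] y)) := by
  induction t using TensorProduct.induction_on with
  | zero => simp
  | tmul u v => simp [Algebra.TensorProduct.tmul_mul_tmul, smul_mul_assoc]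
  | add t₁ t₂ h₁ h₂ => simp only [map_add, add_mul, h₁, h₂]

set_option synthInstance.maxHeartbeats 1000000 in
lemma W_lemma (a : A) {ι : Type*} (r : Repr ℂ a ι) :
    ∑ i ∈ r.index, ((S (r.left i)) ⊗ₜ[ℂ] (1:A)) * comul (r.right i)
    = (1:A) ⊗ₜ[ℂ] a := by
  have sub : ∀ (x : A) (T : A ⊗[ℂ] A),
      ((S x) ⊗ₜ[ℂ] (1:A)) * T
      = LinearMap.rTensor A (LinearMap.mul' ℂ A ∘ₗ LinearMap.rTensor A S)
          ((TensorProduct.assoc ℂ A A A).symm (x ⊗ₜ[ℂ] T)) := by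
    intro x T
    induction T using TensorProduct.induction_on with
    | zero =>
      rw [mul_zero, TensorProduct.tmul_zero, LinearEquiv.map_zero, map_zero]
    | tmul u v => simp [Algebra.TensorProduct.tmul_mul_tmul]
    | add t₁ t₂ h₁ h₂ =>
      rw [mul_add, TensorProduct.tmul_add, LinearEquiv.map_add, map_add, h₁, h₂]
  rw [Finset.sum_congr rfl (fun i (_ : i ∈ r.index) => sub (r.left i) (comul (r.right i)))]
  rw [← map_sum, ← map_sum]
  have e1 : (∑ i ∈ r.index, r.left i ⊗ₜ[ℂ] comul (r.right i))
      = LinearMap.lTensor A (comul (R := ℂ)) (comul a) := by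
    rw [← r.eq]; simp [map_sum]
  rw [e1, coassoc_symm_apply, ← LinearMap.rTensor_comp_apply]
  have e2 : (LinearMap.mul' ℂ A ∘ₗ LinearMap.rTensor A S) ∘ₗ comul (R := ℂ)
      = Algebra.linearMap ℂ A ∘ₗ counit (R := ℂ) := by
    rw [LinearMap.comp_assoc]
    exact HopfAlgebra.mul_antipode_rTensor_comul
  rw [e2, LinearMap.rTensor_comp_apply, rTensor_counit_comul]
  simp

set_option synthInstance.maxHeartbeats 1000000 in
lemma W'_lemma (a : A) {ι : Type*} (r : Repr ℂ a ι) :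
    ∑ i ∈ r.index, comul (r.left i) * ((1:A) ⊗ₜ[ℂ] S (r.right i))
    = a ⊗ₜ[ℂ] (1:A) := by
  have sub : ∀ (T : A ⊗[ℂ] A) (y : A),
      T * ((1:A) ⊗ₜ[ℂ] S y)
      = LinearMap.lTensor A (LinearMap.mul' ℂ A ∘ₗ LinearMap.lTensor A S)
          ((TensorProduct.assoc ℂ A A A) (T ⊗ₜ[ℂ] y)) := by
    intro T y
    induction T using TensorProduct.induction_on with
    | zero =>
      rw [zero_mul, TensorProduct.zero_tmul, LinearEquiv.map_zero, map_zero]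
    | tmul u v => simp [Algebra.TensorProduct.tmul_mul_tmul]
    | add t₁ t₂ h₁ h₂ =>
      rw [add_mul, TensorProduct.add_tmul, LinearEquiv.map_add, map_add, h₁, h₂]
  rw [Finset.sum_congr rfl (fun i (_ : i ∈ r.index) => sub (comul (r.left i)) (r.right i))]
  rw [← map_sum, ← map_sum]
  have e1 : (∑ i ∈ r.index, comul (r.left i) ⊗ₜ[ℂ] r.right i)
      = LinearMap.rTensor A (comul (R := ℂ)) (comul a) := by
    rw [← r.eq]; simp [map_sum]
  rw [e1, coassoc_apply, ← LinearMap.lTensor_comp_apply]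
  have e2 : (LinearMap.mul' ℂ A ∘ₗ LinearMap.lTensor A S) ∘ₗ comul (R := ℂ)
      = Algebra.linearMap ℂ A ∘ₗ counit (R := ℂ) := by
    rw [LinearMap.comp_assoc]
    exact HopfAlgebra.mul_antipode_lTensor_comul
  rw [e2, LinearMap.lTensor_comp_apply, lTensor_counit_comul]
  simp

/-- Strong left invariance of the left integral `φ`. -/
lemma sliL (φ : A →ₗ[ℂ] ℂ)
    (hφL : ∀ a : A, (TensorProduct.rid ℂ A) (LinearMap.lTensor A φ (comul a)) = φ a • (1 : A))
    (a b : A) {ι κ : Type*} (r : Repr ℂ a ι) (s : Repr ℂ b κ) :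
    ∑ j ∈ s.index, φ (a * s.right j) • s.left j
    = ∑ i ∈ r.index, φ (r.right i * b) • S (r.left i) := by
  have hF : ∀ z : A, Fmap φ (comul z) = φ z • 1 := fun z => hφL z
  have chain : ∑ i ∈ r.index, φ (r.right i * b) • S (r.left i)
      = Fmap φ ((1 ⊗ₜ[ℂ] a) * comul b) := by
    calc ∑ i ∈ r.index, φ (r.right i * b) • S (r.left i)
        = ∑ i ∈ r.index, S (r.left i) * Fmap φ (comul (r.right i * b)) := by
          refine Finset.sum_congr rfl fun i _ => ?_
          rw [hF, mul_smul_comm, mul_one]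
      _ = ∑ i ∈ r.index, Fmap φ (((S (r.left i)) ⊗ₜ[ℂ] (1:A)) * comul (r.right i) * comul b) := by
          refine Finset.sum_congr rfl fun i _ => ?_
          rw [mul_Fmap, Bialgebra.comul_mul, mul_assoc]
      _ = Fmap φ ((∑ i ∈ r.index, ((S (r.left i)) ⊗ₜ[ℂ] (1:A)) * comul (r.right i)) * comul b) := by
          rw [Finset.sum_mul, map_sum]
      _ = Fmap φ ((1 ⊗ₜ[ℂ] a) * comul b) := by rw [W_lemma a r]
  rw [chain, ← s.eq, Finset.mul_sum]
  rw [map_sum]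
  refine Finset.sum_congr rfl fun j _ => ?_
  rw [Algebra.TensorProduct.tmul_mul_tmul, one_mul, Fmap_tmul]

/-- Strong right invariance of the right integral `ψ = φ ∘ S`. -/
lemma sliR (φ : A →ₗ[ℂ] ℂ)
    (hψR : ∀ a : A, (TensorProduct.lid ℂ A) (LinearMap.rTensor A (φ ∘ₗ S) (comul a))
      = φ (S a) • (1 : A))
    (a b : A) {ι κ : Type*} (r : Repr ℂ a ι) (s : Repr ℂ b κ) :
    ∑ j ∈ s.index, φ (S (s.left j * a)) • s.right j
    = ∑ i ∈ r.index, φ (S (b * r.left i)) • S (r.right i) := by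
  have hG : ∀ z : A, Gmap (φ ∘ₗ S) (comul z) = φ (S z) • 1 := fun z => hψR z
  have chain : ∑ i ∈ r.index, φ (S (b * r.left i)) • S (r.right i)
      = Gmap (φ ∘ₗ S) (comul b * (a ⊗ₜ[ℂ] (1:A))) := by
    calc ∑ i ∈ r.index, φ (S (b * r.left i)) • S (r.right i)
        = ∑ i ∈ r.index, Gmap (φ ∘ₗ S) (comul (b * r.left i)) * S (r.right i) := by
          refine Finset.sum_congr rfl fun i _ => ?_
          rw [hG, smul_mul_assoc, one_mul]
      _ = ∑ i ∈ r.index, Gmap (φ ∘ₗ S) (comul b * (comul (r.left i) * ((1:A) ⊗ₜ[ℂ] S (r.right i)))) := by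
          refine Finset.sum_congr rfl fun i _ => ?_
          rw [Gmap_mul, Bialgebra.comul_mul, mul_assoc]
      _ = Gmap (φ ∘ₗ S) (comul b * (∑ i ∈ r.index, comul (r.left i) * ((1:A) ⊗ₜ[ℂ] S (r.right i)))) := by
          rw [Finset.mul_sum, map_sum]
      _ = Gmap (φ ∘ₗ S) (comul b * (a ⊗ₜ[ℂ] (1:A))) := by rw [W'_lemma a r]
  rw [chain, ← s.eq, Finset.sum_mul]
  rw [map_sum]
  refine Finset.sum_congr rfl fun j _ => ?_
  rw [Algebra.TensorProduct.tmul_mul_tmul, mul_one, Gmap_tmul]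
  simp

end SLI
section Main

variable {A : Type*} [Ring A] [HopfAlgebra ℂ A]

local notation "S" => (antipode (R := ℂ) (A := A))
local notation "ε" => (counit (R := ℂ) (A := A))

/-- `Theta φ z = ∑ φ(S z₂) • z₁`. -/
noncomputable def Theta (φ : A →ₗ[ℂ] ℂ) : A → A := fun z =>
  (TensorProduct.rid ℂ A) (LinearMap.lTensor A (φ ∘ₗ S) (comul z))

lemma Theta_repr (φ : A →ₗ[ℂ] ℂ) (z : A) {ι : Type*} (r : Repr ℂ z ι) :
    Theta φ z = ∑ i ∈ r.index, φ (S (r.right i)) • r.left i := by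
  rw [Theta, ← r.eq]; simp [map_sum]

/-- `Mdef φ z = ∑ φ(S (S z₁)) • z₂`. -/
noncomputable def Mdef (φ : A →ₗ[ℂ] ℂ) : A → A := fun z =>
  (TensorProduct.lid ℂ A) (LinearMap.rTensor A (φ ∘ₗ (S ∘ₗ S)) (comul z))

lemma Mdef_repr (φ : A →ₗ[ℂ] ℂ) (z : A) {ι : Type*} (r : Repr ℂ z ι) :
    Mdef φ z = ∑ i ∈ r.index, φ (S (S (r.left i))) • r.right i := by
  rw [Mdef, ← r.eq]; simp [map_sum]

end Main

open TensorProduct HopfAlgebra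

/-- The automorphisms `S²`, `σ` and `σ'` mutually commute. -/
theorem modular_automorphisms_commute
    {A : Type*} [Ring A] [HopfAlgebra ℂ A]
    (hS : Function.Bijective (antipode (R := ℂ) (A := A)))
    (φ : A →ₗ[ℂ] ℂ) (hφ0 : φ ≠ 0)
    (hφL : ∀ a : A,
      (TensorProduct.rid ℂ A) (LinearMap.lTensor A φ (Coalgebra.comul a)) = φ a • (1 : A))
    (hφf1 : ∀ a : A, (∀ b : A, φ (a * b) = 0) → a = 0)
    (hφf2 : ∀ a : A, (∀ b : A, φ (b * a) = 0) → a = 0)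
    (σ : A ≃ₐ[ℂ] A) (hσ : ∀ a b : A, φ (a * b) = φ (b * σ a))
    (hψR : ∀ a : A,
      (TensorProduct.lid ℂ A) (LinearMap.rTensor A (φ ∘ₗ antipode (R := ℂ))
        (Coalgebra.comul a)) = φ (antipode (R := ℂ) a) • (1 : A))
    (σ' : A ≃ₐ[ℂ] A)
    (hσ' : ∀ a b : A, φ (antipode (R := ℂ) (a * b)) = φ (antipode (R := ℂ) (b * σ' a))) :
    (∀ a : A, σ (σ' a) = σ' (σ a)) ∧
      (∀ a : A, σ (antipode (R := ℂ) (antipode (R := ℂ) a)) =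
        antipode (R := ℂ) (antipode (R := ℂ) (σ a))) ∧
      (∀ a : A, σ' (antipode (R := ℂ) (antipode (R := ℂ) a)) =
        antipode (R := ℂ) (antipode (R := ℂ) (σ' a))) := by
  classical
  have Sinj : Function.Injective (antipode (R := ℂ) (A := A)) := hS.1
  have Ssurj : Function.Surjective (antipode (R := ℂ) (A := A)) := hS.2
  -- elementwise invariance
  have hφL' : ∀ (z : A) (r : Coalgebra.Repr ℂ z (A × A)),
      ∑ i ∈ r.index, φ (r.right i) • r.left i = φ z • (1 : A) := by
    intro z r
    have h := hφL z
    rw [← r.eq] at h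
    simpa [map_sum] using h
  have hψR' : ∀ (z : A) (r : Coalgebra.Repr ℂ z (A × A)),
      ∑ i ∈ r.index, φ (antipode (R := ℂ) (r.left i)) • r.right i
        = φ (antipode (R := ℂ) z) • (1 : A) := by
    intro z r
    have h := hψR z
    rw [← r.eq] at h
    simpa [map_sum] using h
  -- faithfulness of ψ = φ ∘ S
  have hψf1 : ∀ z : A, (∀ b : A, φ (antipode (R := ℂ) (z * b)) = 0) → z = 0 := by
    intro z h
    have h2 : ∀ c : A, φ (c * antipode (R := ℂ) z) = 0 := by
      intro c
      obtain ⟨b, rfl⟩ := Ssurj c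
      have := h b; rwa [S_mul] at this
    have h3 := hφf2 _ h2
    exact Sinj (by rw [h3, map_zero])
  have hψf2 : ∀ z : A, (∀ b : A, φ (antipode (R := ℂ) (b * z)) = 0) → z = 0 := by
    intro z h
    have h2 : ∀ c : A, φ (antipode (R := ℂ) z * c) = 0 := by
      intro c
      obtain ⟨b, rfl⟩ := Ssurj c
      have := h b; rwa [S_mul] at this
    have h3 := hφf1 _ h2
    exact Sinj (by rw [h3, map_zero])
  -- the two pairing identities
  have hγ : ∀ z b : A, φ (antipode (R := ℂ) (b * Theta φ z))
      = φ (antipode (R := ℂ) z) * φ b := by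
    intro z b
    have r : Coalgebra.Repr ℂ z (A × A) := ℛ ℂ z
    have s : Coalgebra.Repr ℂ b (A × A) := ℛ ℂ b
    have h := sliR φ hψR z b r s
    have h2 := congrArg φ h
    simp only [map_sum, map_smul, smul_eq_mul] at h2
    have h3 := congrArg (fun w => φ (antipode (R := ℂ) (w * z))) (hφL' b s)
    simp only [Finset.sum_mul, smul_mul_assoc, one_mul, map_sum, map_smul, smul_eq_mul] at h3
    have h4 : φ (antipode (R := ℂ) (b * Theta φ z))
        = ∑ i ∈ r.index, φ (antipode (R := ℂ) (r.right i))
            * φ (antipode (R := ℂ) (b * r.left i)) := by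
      rw [Theta_repr φ z r, Finset.mul_sum]
      simp only [mul_smul_comm, map_sum, map_smul, smul_eq_mul]
    rw [h4]
    calc ∑ i ∈ r.index, φ (antipode (R := ℂ) (r.right i))
            * φ (antipode (R := ℂ) (b * r.left i))
        = ∑ i ∈ r.index, φ (antipode (R := ℂ) (b * r.left i))
            * φ (antipode (R := ℂ) (r.right i)) := by
          exact Finset.sum_congr rfl fun i _ => mul_comm _ _
      _ = ∑ j ∈ s.index, φ (antipode (R := ℂ) (s.left j * z)) * φ (s.right j) := h2.symm
      _ = ∑ j ∈ s.index, φ (s.right j) * φ (antipode (R := ℂ) (s.left j * z)) := by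
          exact Finset.sum_congr rfl fun j _ => mul_comm _ _
      _ = φ b * φ (antipode (R := ℂ) z) := h3
      _ = φ (antipode (R := ℂ) z) * φ b := mul_comm _ _
  have hM' : ∀ z b : A, φ (Mdef φ z * b) = φ z * φ (antipode (R := ℂ) b) := by
    intro z b
    have r : Coalgebra.Repr ℂ z (A × A) := ℛ ℂ z
    have s : Coalgebra.Repr ℂ b (A × A) := ℛ ℂ b
    have h := sliL φ hφL z b r s
    have h2 := congrArg (fun w => φ (antipode (R := ℂ) w)) h
    simp only [map_sum, map_smul, smul_eq_mul] at h2
    have h3 := congrArg (fun w => φ (z * w)) (hψR' b s)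
    simp only [Finset.mul_sum, mul_smul_comm, one_mul, mul_one, map_sum, map_smul,
      smul_eq_mul] at h3
    have h4 : φ (Mdef φ z * b)
        = ∑ i ∈ r.index, φ (antipode (R := ℂ) (antipode (R := ℂ) (r.left i)))
            * φ (r.right i * b) := by
      rw [Mdef_repr φ z r, Finset.sum_mul]
      simp only [smul_mul_assoc, map_sum, map_smul, smul_eq_mul]
    rw [h4]
    calc ∑ i ∈ r.index, φ (antipode (R := ℂ) (antipode (R := ℂ) (r.left i)))
            * φ (r.right i * b)
        = ∑ i ∈ r.index, φ (r.right i * b)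
            * φ (antipode (R := ℂ) (antipode (R := ℂ) (r.left i))) := by
          exact Finset.sum_congr rfl fun i _ => mul_comm _ _
      _ = ∑ j ∈ s.index, φ (z * s.right j) * φ (antipode (R := ℂ) (s.left j)) := h2.symm
      _ = ∑ j ∈ s.index, φ (antipode (R := ℂ) (s.left j)) * φ (z * s.right j) := by
          exact Finset.sum_congr rfl fun j _ => mul_comm _ _
      _ = φ (antipode (R := ℂ) b) * φ z := h3
      _ = φ z * φ (antipode (R := ℂ) b) := mul_comm _ _
  -- normalized elements for φ and ψ
  obtain ⟨c₀, hc₀⟩ : ∃ c, φ c ≠ 0 := by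
    by_contra h
    push_neg at h
    exact hφ0 (by ext c; simpa using h c)
  obtain ⟨b₀, hb₀⟩ := Ssurj c₀
  set a₀ : A := (φ c₀)⁻¹ • b₀ with ha₀def
  have ha₀ : φ (antipode (R := ℂ) a₀) = 1 := by
    rw [ha₀def, map_smul, map_smul, hb₀, smul_eq_mul, inv_mul_cancel₀ hc₀]
  set a₁ : A := (φ c₀)⁻¹ • c₀ with ha₁def
  have ha₁ : φ a₁ = 1 := by
    rw [ha₁def, map_smul, smul_eq_mul, inv_mul_cancel₀ hc₀]
  -- the modular element d and its inverse data
  set d : A := Theta φ a₀ with hddef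
  have hd : ∀ b : A, φ (antipode (R := ℂ) (b * d)) = φ b := by
    intro b
    rw [hddef, hγ a₀ b, ha₀, one_mul]
  have hΘd : ∀ z : A, Theta φ z = φ (antipode (R := ℂ) z) • d := by
    intro z
    have key : ∀ b : A, φ (antipode (R := ℂ)
        (b * (Theta φ z - φ (antipode (R := ℂ) z) • d))) = 0 := by
      intro b
      rw [mul_sub, map_sub, map_sub, mul_smul_comm, map_smul, map_smul, smul_eq_mul,
        hγ z b, hd b, sub_eq_zero, mul_comm]
    exact sub_eq_zero.mp (hψf2 _ key)
  set d'' : A := Mdef φ a₁ with hd''def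
  have hd'' : ∀ b : A, φ (d'' * b) = φ (antipode (R := ℂ) b) := by
    intro b
    rw [hd''def, hM' a₁ b, ha₁, one_mul]
  have hMz : ∀ z : A, Mdef φ z = φ z • d'' := by
    intro z
    have key : ∀ b : A, φ ((Mdef φ z - φ z • d'') * b) = 0 := by
      intro b
      rw [sub_mul, map_sub, smul_mul_assoc, map_smul, smul_eq_mul, hM' z b, hd'' b,
        sub_eq_zero]
    exact sub_eq_zero.mp (hφf1 _ key)
  -- the scaling constant τ
  set τ : ℂ := Coalgebra.counit (R := ℂ) d'' with hτdef
  have hτ : ∀ z : A, φ (antipode (R := ℂ) (antipode (R := ℂ) z)) = φ z * τ := by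
    intro z
    have r : Coalgebra.Repr ℂ z (A × A) := ℛ ℂ z
    have h1 := congrArg (Coalgebra.counit (R := ℂ)) (Mdef_repr φ z r)
    rw [hMz z] at h1
    simp only [map_sum, map_smul, smul_eq_mul] at h1
    have h2 : ∑ i ∈ r.index,
        φ (antipode (R := ℂ) (antipode (R := ℂ) (r.left i))) * Coalgebra.counit (R := ℂ) (r.right i)
        = φ (antipode (R := ℂ) (antipode (R := ℂ) z)) := by
      have h3 := congrArg (fun w => φ (antipode (R := ℂ) (antipode (R := ℂ) w)))
        (sum_smul_counit r)
      simp only [map_sum, map_smul, smul_eq_mul] at h3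
      rw [← h3]
      exact Finset.sum_congr rfl fun i _ => mul_comm _ _
    rw [h2] at h1
    exact h1.symm
  have hτ0 : τ ≠ 0 := by
    intro h0
    apply hφ0
    ext c
    obtain ⟨b, rfl⟩ := Ssurj c
    obtain ⟨z, rfl⟩ := Ssurj b
    simp only [LinearMap.zero_apply]
    rw [hτ z, h0, mul_zero]
  -- inverse of d
  set u : A := σ d'' with hudef
  have hdu : d * u = 1 := by
    have key : ∀ b : A, φ (b * (d * u - 1)) = 0 := by
      intro b
      rw [mul_sub, map_sub, mul_one, ← mul_assoc, sub_eq_zero, hudef, ← hσ d'' (b * d),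
        hd'' (b * d), hd b]
    exact sub_eq_zero.mp (hφf2 _ key)
  have hu'd : d'' * σ'.symm d = 1 := by
    have key : ∀ b : A, φ ((d'' * σ'.symm d - 1) * b) = 0 := by
      intro b
      rw [sub_mul, map_sub, one_mul, mul_assoc, sub_eq_zero, hd'' (σ'.symm d * b),
        hσ' (σ'.symm d) b]
      rw [AlgEquiv.apply_symm_apply, hd b]
    exact sub_eq_zero.mp (hφf1 _ key)
  have huv : u * σ (σ'.symm d) = 1 := by
    rw [hudef, ← map_mul, hu'd, map_one]
  have hud : u * d = 1 := by
    have hv : σ (σ'.symm d) = d := by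
      calc σ (σ'.symm d) = 1 * σ (σ'.symm d) := (one_mul _).symm
        _ = (d * u) * σ (σ'.symm d) := by rw [hdu]
        _ = d * (u * σ (σ'.symm d)) := mul_assoc _ _ _
        _ = d := by rw [huv, mul_one]
    rw [← hv, huv]
  -- d is grouplike
  have hΔd : Coalgebra.comul (R := ℂ) d = d ⊗ₜ[ℂ] d := by
    have r : Coalgebra.Repr ℂ a₀ (A × A) := ℛ ℂ a₀
    have r1 : ∀ i : r.ι, Coalgebra.Repr ℂ (r.left i) (A × A) := fun i => ℛ ℂ (r.left i)
    have r2 : ∀ i : r.ι, Coalgebra.Repr ℂ (r.right i) (A × A) := fun i => ℛ ℂ (r.right i)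
    have key := triple_switch (M := A ⊗[ℂ] A) (mk₃
      (fun α₁ α₂ α₃ => φ (antipode (R := ℂ) α₃) • (α₁ ⊗ₜ[ℂ] α₂))
      (by intro x x' y z; simp [TensorProduct.add_tmul, smul_add])
      (by intro c x y z; simp [TensorProduct.smul_tmul', smul_smul, mul_comm])
      (by intro x y y' z; simp [TensorProduct.tmul_add, smul_add])
      (by intro c x y z; simp [TensorProduct.tmul_smul, smul_smul, mul_comm])
      (by intro x y z z'; simp [map_add, add_smul])
      (by intro c x y z; simp [map_smul, smul_eq_mul, mul_smul]))
      a₀ r r1 r2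
    simp only [mk₃_apply] at key
    have lhs_eq : ∑ i ∈ r.index, ∑ k ∈ (r1 i).index,
        φ (antipode (R := ℂ) (r.right i)) • ((r1 i).left k ⊗ₜ[ℂ] (r1 i).right k)
        = Coalgebra.comul (R := ℂ) d := by
      rw [hddef, Theta_repr φ a₀ r, map_sum]
      refine Finset.sum_congr rfl fun i _ => ?_
      rw [map_smul, ← (r1 i).eq, Finset.smul_sum]
    have rhs_eq : ∑ i ∈ r.index, ∑ k ∈ (r2 i).index,
        φ (antipode (R := ℂ) ((r2 i).right k)) • (r.left i ⊗ₜ[ℂ] (r2 i).left k)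
        = d ⊗ₜ[ℂ] d := by
      have e1 : ∀ i ∈ r.index, (∑ k ∈ (r2 i).index,
          φ (antipode (R := ℂ) ((r2 i).right k)) • (r.left i ⊗ₜ[ℂ] (r2 i).left k))
          = φ (antipode (R := ℂ) (r.right i)) • (r.left i ⊗ₜ[ℂ] d) := by
        intro i _
        have e2 : r.left i ⊗ₜ[ℂ] Theta φ (r.right i)
            = ∑ k ∈ (r2 i).index,
              φ (antipode (R := ℂ) ((r2 i).right k)) • (r.left i ⊗ₜ[ℂ] (r2 i).left k) := by
          rw [Theta_repr φ (r.right i) (r2 i), TensorProduct.tmul_sum]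
          exact Finset.sum_congr rfl fun k _ => by rw [TensorProduct.tmul_smul]
        rw [← e2, hΘd (r.right i), TensorProduct.tmul_smul]
      rw [Finset.sum_congr rfl e1]
      have e3 : ∑ i ∈ r.index,
          φ (antipode (R := ℂ) (r.right i)) • (r.left i ⊗ₜ[ℂ] d) = Theta φ a₀ ⊗ₜ[ℂ] d := by
        rw [Theta_repr φ a₀ r, TensorProduct.sum_tmul]
        exact Finset.sum_congr rfl fun i _ => by rw [TensorProduct.smul_tmul']
      rw [e3, ← hddef]
    rw [lhs_eq, rhs_eq] at key
    exact key
  have hεd : Coalgebra.counit (R := ℂ) d = 1 := by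
    have r : Coalgebra.Repr ℂ a₀ (A × A) := ℛ ℂ a₀
    have h1 := congrArg (Coalgebra.counit (R := ℂ)) (Theta_repr φ a₀ r)
    rw [← hddef] at h1
    simp only [map_sum, map_smul, smul_eq_mul] at h1
    have h2 := congrArg (fun w => φ (antipode (R := ℂ) w)) (_root_.sum_counit_smul r)
    simp only [map_sum, map_smul, smul_eq_mul] at h2
    rw [h1, Finset.sum_congr rfl fun i _ => mul_comm _ _, h2, ha₀]
  -- S d = u
  have hSd : antipode (R := ℂ) d = u := by
    have h1 := HopfAlgebra.mul_antipode_rTensor_comul_apply (R := ℂ) d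
    rw [hΔd] at h1
    simp only [LinearMap.rTensor_tmul, LinearMap.mul'_apply] at h1
    have h2 : antipode (R := ℂ) d * d = 1 := by
      rw [h1, hεd, map_one]
    calc antipode (R := ℂ) d = antipode (R := ℂ) d * (d * u) := by rw [hdu, mul_one]
      _ = (antipode (R := ℂ) d * d) * u := (mul_assoc _ _ _).symm
      _ = u := by rw [h2, one_mul]
  -- σ' d = τ • d
  have hσ'd : σ' d = τ • d := by
    have key : ∀ b : A, φ (antipode (R := ℂ) (b * (σ' d - τ • d))) = 0 := by
      intro b
      rw [mul_sub, map_sub, map_sub, sub_eq_zero]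
      have l1 : φ (antipode (R := ℂ) (b * σ' d)) = φ (antipode (R := ℂ) (d * b)) :=
        (hσ' d b).symm
      have l2 : φ (antipode (R := ℂ) (d * b)) = φ b * τ := by
        rw [S_mul d b, hSd, hudef, ← hσ d'' (antipode (R := ℂ) b),
          hd'' (antipode (R := ℂ) b)]
        exact hτ b
      have l3 : φ (antipode (R := ℂ) (b * (τ • d))) = φ b * τ := by
        rw [mul_smul_comm, map_smul, map_smul, smul_eq_mul, hd b, mul_comm]
      rw [l1, l2, l3]
    exact sub_eq_zero.mp (hψf2 _ key)
  -- σ d = τ • d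
  have hσd : σ d = τ • d := by
    have key : ∀ b : A, φ (b * (σ d - τ • d)) = 0 := by
      intro b
      rw [mul_sub, map_sub, sub_eq_zero]
      have l1 : φ (b * σ d) = φ (d * b) := (hσ d b).symm
      have l2 : φ (d * b) = τ * φ (b * d) := by
        have e1 : φ (d * b) = φ (antipode (R := ℂ) ((d * b) * d)) := (hd (d * b)).symm
        rw [mul_assoc] at e1
        rw [e1, hσ' d (b * d), hσ'd, mul_smul_comm, map_smul, map_smul, smul_eq_mul,
          hd (b * d)]
      have l3 : φ (b * (τ • d)) = τ * φ (b * d) := by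
        rw [mul_smul_comm, map_smul, smul_eq_mul]
      rw [l1, l2, l3]
    exact sub_eq_zero.mp (hφf2 _ key)
  -- d intertwines σ and σ'
  have hcomm : ∀ z : A, d * σ' z = σ z * d := by
    intro z
    have key : ∀ b : A, φ (antipode (R := ℂ) (b * (d * σ' z - σ z * d))) = 0 := by
      intro b
      rw [mul_sub, map_sub, map_sub, sub_eq_zero]
      have l1 : φ (antipode (R := ℂ) (b * (d * σ' z)))
          = φ (antipode (R := ℂ) (z * (b * d))) := by
        rw [← mul_assoc]
        exact (hσ' z (b * d)).symm
      have l2 : φ (antipode (R := ℂ) (b * (σ z * d)))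
          = φ (antipode (R := ℂ) (z * (b * d))) := by
        rw [← mul_assoc, hd (b * σ z), ← hσ z b, ← hd (z * b), mul_assoc]
      rw [l1, l2]
    exact sub_eq_zero.mp (hψf2 _ key)
  -- σ u = τ⁻¹ • u
  have hσu : σ u = τ⁻¹ • u := by
    have h1 : σ u * σ d = 1 := by rw [← map_mul, hud, map_one]
    have e : σ u * d = τ⁻¹ • (1 : A) := by
      have h2 : σ u * (τ • d) = 1 := by rw [← hσd, h1]
      rw [mul_smul_comm] at h2
      calc σ u * d = τ⁻¹ • (τ • (σ u * d)) := by
            rw [smul_smul, inv_mul_cancel₀ hτ0, one_smul]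
        _ = τ⁻¹ • (1 : A) := by rw [h2]
    calc σ u = σ u * 1 := (mul_one _).symm
      _ = σ u * (d * u) := by rw [hdu]
      _ = (σ u * d) * u := (mul_assoc _ _ _).symm
      _ = τ⁻¹ • u := by rw [e, smul_mul_assoc, one_mul]
  -- first commutation
  have hσ'z : ∀ z : A, σ' z = u * (σ z * d) := by
    intro z
    calc σ' z = 1 * σ' z := (one_mul _).symm
      _ = (u * d) * σ' z := by rw [hud]
      _ = u * (d * σ' z) := mul_assoc _ _ _
      _ = u * (σ z * d) := by rw [hcomm z]
  have goal1 : ∀ z : A, σ (σ' z) = σ' (σ z) := by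
    intro z
    rw [hσ'z z, hσ'z (σ z), map_mul, map_mul, hσu, hσd]
    rw [smul_mul_assoc, mul_smul_comm, mul_smul_comm, smul_smul,
      inv_mul_cancel₀ hτ0, one_smul]
  -- second commutation
  have hS2mul : ∀ x y : A, antipode (R := ℂ) (antipode (R := ℂ) (x * y))
      = antipode (R := ℂ) (antipode (R := ℂ) x) * antipode (R := ℂ) (antipode (R := ℂ) y) := by
    intro x y; rw [S_mul, S_mul]
  have goal2 : ∀ z : A, σ (antipode (R := ℂ) (antipode (R := ℂ) z))
      = antipode (R := ℂ) (antipode (R := ℂ) (σ z)) := by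
    intro z
    have key : ∀ c : A, φ (c * (σ (antipode (R := ℂ) (antipode (R := ℂ) z))
        - antipode (R := ℂ) (antipode (R := ℂ) (σ z)))) = 0 := by
      intro c
      obtain ⟨b1, rfl⟩ := Ssurj c
      obtain ⟨b, rfl⟩ := Ssurj b1
      rw [mul_sub, map_sub, sub_eq_zero]
      have l1 : φ (antipode (R := ℂ) (antipode (R := ℂ) b)
            * σ (antipode (R := ℂ) (antipode (R := ℂ) z))) = φ (z * b) * τ := by
        rw [← hσ (antipode (R := ℂ) (antipode (R := ℂ) z))
          (antipode (R := ℂ) (antipode (R := ℂ) b)), ← hS2mul z b, hτ (z * b)]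
      have l2 : φ (antipode (R := ℂ) (antipode (R := ℂ) b)
            * antipode (R := ℂ) (antipode (R := ℂ) (σ z))) = φ (z * b) * τ := by
        rw [← hS2mul b (σ z), hτ (b * σ z), ← hσ z b]
      rw [l1, l2]
    exact sub_eq_zero.mp (hφf2 _ key)
  -- S in terms of σ and σ'
  have hF1 : ∀ z : A, antipode (R := ℂ) z = σ (antipode (R := ℂ) (σ' z)) := by
    intro z
    have key : ∀ c : A, φ (c * (antipode (R := ℂ) z
        - σ (antipode (R := ℂ) (σ' z)))) = 0 := by
      intro c
      obtain ⟨b, rfl⟩ := Ssurj c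
      rw [mul_sub, map_sub, sub_eq_zero]
      calc φ (antipode (R := ℂ) b * antipode (R := ℂ) z)
          = φ (antipode (R := ℂ) (z * b)) := by rw [S_mul]
        _ = φ (antipode (R := ℂ) (b * σ' z)) := hσ' z b
        _ = φ (antipode (R := ℂ) (σ' z) * antipode (R := ℂ) b) := by rw [S_mul]
        _ = φ (antipode (R := ℂ) b * σ (antipode (R := ℂ) (σ' z))) :=
            hσ (antipode (R := ℂ) (σ' z)) (antipode (R := ℂ) b)
    exact sub_eq_zero.mp (hφf2 _ key)
  -- third commutation
  have goal3 : ∀ z : A, σ' (antipode (R := ℂ) (antipode (R := ℂ) z))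
      = antipode (R := ℂ) (antipode (R := ℂ) (σ' z)) := by
    intro z
    have lhs : σ (antipode (R := ℂ) (σ' (antipode (R := ℂ) (antipode (R := ℂ) z))))
        = antipode (R := ℂ) (antipode (R := ℂ) (antipode (R := ℂ) z)) :=
      (hF1 _).symm
    have rhs : σ (antipode (R := ℂ) (antipode (R := ℂ) (antipode (R := ℂ) (σ' z))))
        = antipode (R := ℂ) (antipode (R := ℂ) (antipode (R := ℂ) z)) := by
      have h2 := goal2 (antipode (R := ℂ) (σ' z))
      rw [h2, ← hF1 z]
    exact Sinj (σ.injective (lhs.trans rhs.symm))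
  exact ⟨goal1, goal2, goal3⟩
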